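/- arXiv:1609.05490 — 7 statements merged into one kernel-verified Lean document; each statement's English description precedes it below -/
import Mathlib

section
/- Let P > 0, h, a ∈ ℂ^L, let M = (1 + P‖h‖²)·I_L − P·h^H h, and let α_MMSE = P·⟨a,h⟩/(1 + P‖h‖²). Then |α_MMSE|² + P·‖α_MMSE·h − a‖² = P·(a M a^H)/(1 + P‖h‖²); consequently the minimum over α ∈ ℂ of |α|² + P·‖α·h − a‖² equals P·(a M a^H)/(1 + P‖h‖²), so that maximizing the compute-and-forward computation rate over coefficient vectors a is equivalent to minimizing the quadratic form a M a^H. -/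
open Complex Finset Matrix

/-- For `P > 0`, `h, a ∈ ℂ^L`, `M = (1 + P‖h‖²)·I − P·hᴴh` and the MMSE coefficient
`α_MMSE = P⟨a,h⟩/(1 + P‖h‖²)`, one has
`|α_MMSE|² + P‖α_MMSE·h − a‖² = P·(a M aᴴ)/(1 + P‖h‖²)`, and this value is the
minimum of `|α|² + P‖α·h − a‖²` over all `α ∈ ℂ`. -/
theorem mmse_value_eq_quadform (L : ℕ) (P : ℝ) (hP : 0 < P) (h a : Fin L → ℂ)
    (M : Matrix (Fin L) (Fin L) ℂ)
    (hM : M = (1 + P * ∑ l, ‖h l‖ ^ 2) • (1 : Matrix (Fin L) (Fin L) ℂ)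
        - P • Matrix.of (fun m n => (starRingEnd ℂ) (h m) * h n))
    (αM : ℂ)
    (hα : αM = (P : ℂ) * (∑ l, a l * (starRingEnd ℂ) (h l)) /
        (1 + (P : ℂ) * ((∑ l, ‖h l‖ ^ 2 : ℝ) : ℂ))) :
    (‖αM‖ ^ 2 + P * ∑ l, ‖αM * h l - a l‖ ^ 2 =
      P * Complex.re (∑ m, ∑ n, a m * M m n * (starRingEnd ℂ) (a n)) /
        (1 + P * ∑ l, ‖h l‖ ^ 2)) ∧
    (∀ α : ℂ,
      ‖αM‖ ^ 2 + P * ∑ l, ‖αM * h l - a l‖ ^ 2 ≤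
        ‖α‖ ^ 2 + P * ∑ l, ‖α * h l - a l‖ ^ 2) := by
  have hs0 : (0:ℝ) ≤ ∑ l, ‖h l‖ ^ 2 :=
    Finset.sum_nonneg (fun l _ => sq_nonneg _)
  set s : ℝ := ∑ l, ‖h l‖ ^ 2 with hsdef
  set D : ℝ := 1 + P * s with hDdef
  have hDpos : 0 < D := by
    have : 0 ≤ P * s := mul_nonneg hP.le hs0
    simp only [hDdef]; linarith
  have hDne : D ≠ 0 := hDpos.ne'
  set S : ℂ := ∑ l, a l * (starRingEnd ℂ) (h l) with hSdef
  have hDcast : ((D:ℝ):ℂ) = 1 + (P:ℂ) * ((s:ℝ):ℂ) := by push_cast [hDdef]; ring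
  have hαM : αM = (P : ℂ) * S / (D : ℂ) := by rw [hα, hDcast]
  have hsumh : ∑ l, Complex.normSq (h l) = s := by
    simp only [hsdef, Complex.sq_norm]
  have hconjS : (starRingEnd ℂ) S = ∑ n, h n * (starRingEnd ℂ) (a n) := by
    simp only [hSdef, map_sum]
    exact Finset.sum_congr rfl fun n _ => by
      rw [_root_.map_mul, Complex.conj_conj, mul_comm]
  -- expansion of the objective
  have key : ∀ α : ℂ, ‖α‖ ^ 2 + P * ∑ l, ‖α * h l - a l‖ ^ 2
      = D * Complex.normSq α - 2 * P * (α * (starRingEnd ℂ) S).re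
        + P * ∑ l, Complex.normSq (a l) := by
    intro α
    have h1 : ∀ l : Fin L, ‖α * h l - a l‖ ^ 2
        = Complex.normSq α * Complex.normSq (h l)
          - 2 * ((α * (h l * (starRingEnd ℂ) (a l)))).re + Complex.normSq (a l) := by
      intro l
      rw [Complex.sq_norm, Complex.normSq_sub, Complex.normSq_mul]
      rw [mul_assoc]
      ring
    have h2 : ∑ l, ‖α * h l - a l‖ ^ 2
        = Complex.normSq α * s - 2 * (α * (starRingEnd ℂ) S).re
          + ∑ l, Complex.normSq (a l) := by
      rw [Finset.sum_congr rfl (fun l _ => h1 l)]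
      rw [Finset.sum_add_distrib, Finset.sum_sub_distrib, ← Finset.mul_sum, hsumh]
      congr 2
      rw [← Finset.mul_sum, ← Complex.re_sum, ← Finset.mul_sum, hconjS]
    rw [h2, Complex.sq_norm]
    simp only [hDdef]
    ring
  -- quadratic form value
  have hMentry : ∀ m n, M m n = (D:ℂ) * (if m = n then 1 else 0)
      - (P:ℂ) * ((starRingEnd ℂ) (h m) * h n) := by
    intro m n
    simp only [hM, Matrix.sub_apply, Matrix.smul_apply, Matrix.one_apply, Matrix.of_apply,
      Complex.real_smul, smul_ite, smul_zero]
    rw [hDcast]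
    split <;> ring
  have hsum : (∑ m, ∑ n, a m * M m n * (starRingEnd ℂ) (a n))
      = (D:ℂ) * ∑ l, a l * (starRingEnd ℂ) (a l) - (P:ℂ) * (S * (starRingEnd ℂ) S) := by
    simp only [hMentry, mul_sub, sub_mul, Finset.sum_sub_distrib]
    congr 1
    · simp only [mul_ite, ite_mul, mul_one, mul_zero, zero_mul,
        Finset.sum_ite_eq, Finset.mem_univ, if_true]
      rw [Finset.mul_sum]
      exact Finset.sum_congr rfl fun l _ => by ring
    · rw [hconjS, hSdef, Finset.sum_mul_sum]
      rw [Finset.mul_sum]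
      refine Finset.sum_congr rfl fun m _ => ?_
      rw [Finset.mul_sum]
      exact Finset.sum_congr rfl fun n _ => by ring
  have hquad : Complex.re (∑ m, ∑ n, a m * M m n * (starRingEnd ℂ) (a n))
      = D * ∑ l, Complex.normSq (a l) - P * Complex.normSq S := by
    rw [hsum]
    simp only [Complex.mul_conj]
    have hcast : (D:ℂ) * ∑ l, ((Complex.normSq (a l) : ℝ):ℂ)
        - (P:ℂ) * ((Complex.normSq S : ℝ):ℂ)
        = (((D * ∑ l, Complex.normSq (a l) - P * Complex.normSq S : ℝ)):ℂ) := by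
      push_cast; ring
    rw [hcast, Complex.ofReal_re]
  have hnαM : Complex.normSq αM = P^2 * Complex.normSq S / D^2 := by
    rw [hαM, Complex.normSq_div, Complex.normSq_mul, Complex.normSq_ofReal,
      Complex.normSq_ofReal]
    ring
  have hreM : (αM * (starRingEnd ℂ) S).re = P * Complex.normSq S / D := by
    have h1 : αM * (starRingEnd ℂ) S = (((P * Complex.normSq S / D : ℝ)):ℂ) := by
      rw [hαM, div_mul_eq_mul_div, mul_assoc, Complex.mul_conj]
      push_cast; ring
    rw [h1, Complex.ofReal_re]
  constructor
  · rw [key αM, hquad, hnαM, hreM]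
    field_simp
    ring
  · intro α
    rw [key αM, key α, hnαM, hreM]
    have hconjαM : (starRingEnd ℂ) αM = (P:ℂ) * (starRingEnd ℂ) S / (D:ℂ) := by
      rw [hαM, map_div₀, _root_.map_mul, Complex.conj_ofReal, Complex.conj_ofReal]
    have hmul : α * (starRingEnd ℂ) αM = (((P/D:ℝ)):ℂ) * (α * (starRingEnd ℂ) S) := by
      rw [hconjαM]; push_cast; ring
    have hre2 : (α * (starRingEnd ℂ) αM).re = (P/D) * (α * (starRingEnd ℂ) S).re := by
      rw [hmul, Complex.re_ofReal_mul]
    have hexp : D * Complex.normSq (α - αM)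
        = (D * Complex.normSq α - 2 * P * (α * (starRingEnd ℂ) S).re)
          - (D * (P^2 * Complex.normSq S / D^2) - 2 * P * (P * Complex.normSq S / D)) := by
      rw [Complex.normSq_sub, hnαM, hre2]
      field_simp
      ring
    have hnn : 0 ≤ D * Complex.normSq (α - αM) :=
      mul_nonneg hDpos.le (Complex.normSq_nonneg _)
    linarith [hexp ▸ hnn]
end

section
/- Let P > 0 and h, a ∈ ℂ^L. If there exists α ∈ ℂ with |α|² + P·‖α·h − a‖² < P (equivalently, if the compute-and-forward computation rate log⁺(P/(|α|² + P‖αh − a‖²)) is positive for some α), then ‖a‖² < 1 + P‖h‖². -/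
open Complex Finset

/-- If the compute-and-forward rate is positive for some `α`, i.e.
`|α|² + P‖αh − a‖² < P` for some `α ∈ ℂ`, then `‖a‖² < 1 + P‖h‖²`. -/
theorem cf_coeff_bound (L : ℕ) (P : ℝ) (hP : 0 < P) (h a : Fin L → ℂ)
    (hpos : ∃ α : ℂ,
      ‖α‖ ^ 2 + P * ∑ l, ‖α * h l - a l‖ ^ 2 < P) :
    (∑ l, ‖a l‖ ^ 2) < 1 + P * ∑ l, ‖h l‖ ^ 2 := by
  obtain ⟨α, hα⟩ := hpos
  have key : ∀ v : Fin L → ℂ, ∑ l, ‖v l‖ ^ 2 =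
      ‖((WithLp.equiv 2 (Fin L → ℂ)).symm v : EuclideanSpace ℂ (Fin L))‖ ^ 2 := by
    intro v
    rw [EuclideanSpace.norm_eq, Real.sq_sqrt (by positivity)]
    simp
  set A : EuclideanSpace ℂ (Fin L) := (WithLp.equiv 2 (Fin L → ℂ)).symm a with hA
  set H : EuclideanSpace ℂ (Fin L) := (WithLp.equiv 2 (Fin L → ℂ)).symm h with hH
  have hD : (∑ l, ‖α * h l - a l‖ ^ 2) = ‖α • H - A‖ ^ 2 := by
    rw [key]
    congr 1
  rw [key a, key h] at *
  have tri : ‖A‖ ≤ ‖α‖ * ‖H‖ + ‖α • H - A‖ := by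
    calc ‖A‖ = ‖α • H - (α • H - A)‖ := by congr 1; abel
      _ ≤ ‖α • H‖ + ‖α • H - A‖ := norm_sub_le _ _
      _ = ‖α‖ * ‖H‖ + ‖α • H - A‖ := by
          rw [norm_smul]
  rw [hD] at hα
  have h1 : (0:ℝ) ≤ ‖A‖ := norm_nonneg _
  have h2 : (0:ℝ) ≤ ‖H‖ := norm_nonneg _
  have h3 : (0:ℝ) ≤ ‖α • H - A‖ := norm_nonneg _
  have h4 : (0:ℝ) ≤ ‖α‖ := norm_nonneg _
  show ‖A‖ ^ 2 < 1 + P * ‖H‖ ^ 2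
  have e1 : ‖A‖ ^ 2 ≤ (‖α‖ * ‖H‖ + ‖α • H - A‖) ^ 2 :=
    pow_le_pow_left₀ h1 tri 2
  have e2 : P * (‖α‖ * ‖H‖ + ‖α • H - A‖) ^ 2 ≤
      (‖α‖ ^ 2 + P * ‖α • H - A‖ ^ 2) * (P * ‖H‖ ^ 2 + 1) := by
    nlinarith [sq_nonneg (‖α‖ - P * ‖α • H - A‖ * ‖H‖)]
  have e3 : (‖α‖ ^ 2 + P * ‖α • H - A‖ ^ 2) * (P * ‖H‖ ^ 2 + 1) <
      P * (P * ‖H‖ ^ 2 + 1) := by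
    have : (0:ℝ) < P * ‖H‖ ^ 2 + 1 := by positivity
    exact mul_lt_mul_of_pos_right hα this
  nlinarith [mul_le_mul_of_nonneg_left e1 hP.le]
end

section
/- Let P > 0 and h, a ∈ ℂ^L, and let M = (1 + P‖h‖²)·I_L − P·h^H h. Then there exists α ∈ ℂ with |α|² + P·‖α·h − a‖² < P if and only if a M a^H < 1 + P‖h‖²; that is, the compute-and-forward computation rate for coefficient vector a is positive exactly when the quadratic form a M a^H is smaller than 1 + P‖h‖². -/
open Complex Finset Matrix

private lemma cf_term (α x b : ℂ) :
    Complex.normSq (α * x - b)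
      = Complex.normSq α * Complex.normSq x - 2 * (α * (x * (starRingEnd ℂ) b)).re
        + Complex.normSq b := by
  simp [Complex.normSq_apply, Complex.mul_re, Complex.mul_im, Complex.sub_re, Complex.sub_im,
    Complex.conj_re, Complex.conj_im]
  ring

private lemma cf_key (P H A : ℝ) (t α : ℂ) :
    (1 + P * H) * (Complex.normSq α
        + P * (Complex.normSq α * H - 2 * (α * t).re + A))
      = Complex.normSq (((1 + P * H : ℝ) : ℂ) * α - (P : ℂ) * (starRingEnd ℂ) t)
        + P * ((1 + P * H) * A - P * Complex.normSq t) := by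
  simp [Complex.normSq_apply, Complex.mul_re, Complex.mul_im, Complex.sub_re, Complex.sub_im,
    Complex.conj_re, Complex.conj_im, Complex.ofReal_re, Complex.ofReal_im]
  ring

/-- With `M = (1 + P‖h‖²)·I − P·hᴴh`, there exists `α ∈ ℂ` with
`|α|² + P‖αh − a‖² < P` if and only if `a M aᴴ < 1 + P‖h‖²`. -/
theorem cf_rate_pos_iff_quadform (L : ℕ) (P : ℝ) (hP : 0 < P) (h a : Fin L → ℂ)
    (M : Matrix (Fin L) (Fin L) ℂ)
    (hM : M = (1 + P * ∑ l, ‖h l‖ ^ 2) • (1 : Matrix (Fin L) (Fin L) ℂ)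
        - P • Matrix.of (fun m n => (starRingEnd ℂ) (h m) * h n)) :
    (∃ α : ℂ,
      ‖α‖ ^ 2 + P * ∑ l, ‖α * h l - a l‖ ^ 2 < P) ↔
    Complex.re (∑ m, ∑ n, a m * M m n * (starRingEnd ℂ) (a n)) <
      1 + P * ∑ l, ‖h l‖ ^ 2 := by
  set H : ℝ := ∑ l, ‖h l‖ ^ 2 with hHdef
  set A : ℝ := ∑ l, Complex.normSq (a l) with hAdef
  set t : ℂ := ∑ l, h l * (starRingEnd ℂ) (a l) with htdef
  have hH2 : H = ∑ l, Complex.normSq (h l) := by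
    simp [hHdef, Complex.sq_norm]
  have hHnn : 0 ≤ H := by
    rw [hH2]; exact Finset.sum_nonneg fun l _ => Complex.normSq_nonneg _
  have hc : 0 < 1 + P * H := by nlinarith
  -- the quadratic form
  have hMapp : ∀ m n, M m n
      = ((1 + P * H : ℝ) : ℂ) * (if m = n then 1 else 0)
        - (P : ℂ) * ((starRingEnd ℂ) (h m) * h n) := by
    intro m n
    simp [hM, Matrix.sub_apply, Matrix.one_apply, Matrix.of_apply, Complex.real_smul,
      mul_ite, mul_one, mul_zero]
  have hconjt : (∑ m, a m * (starRingEnd ℂ) (h m)) = (starRingEnd ℂ) t := by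
    rw [htdef, map_sum]
    exact Finset.sum_congr rfl fun l _ => by simp [mul_comm]
  have hS : (∑ m, ∑ n, a m * M m n * (starRingEnd ℂ) (a n))
      = ((1 + P * H : ℝ) : ℂ) * (A : ℂ) - (P : ℂ) * ((Complex.normSq t : ℝ) : ℂ) := by
    have step : ∀ m, (∑ n, a m * M m n * (starRingEnd ℂ) (a n))
        = ((1 + P * H : ℝ) : ℂ) * (a m * (starRingEnd ℂ) (a m))
          - (P : ℂ) * ((a m * (starRingEnd ℂ) (h m)) * t) := by
      intro m
      have e1 : (∑ n, a m * (((1 + P * H : ℝ) : ℂ) * (if m = n then 1 else 0))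
          * (starRingEnd ℂ) (a n))
          = ((1 + P * H : ℝ) : ℂ) * (a m * (starRingEnd ℂ) (a m)) := by
        simp [mul_ite, ite_mul, mul_zero, zero_mul, mul_one, Finset.sum_ite_eq]
        ring
      have e2 : (∑ n, a m * ((P : ℂ) * ((starRingEnd ℂ) (h m) * h n))
          * (starRingEnd ℂ) (a n))
          = (P : ℂ) * ((a m * (starRingEnd ℂ) (h m)) * t) := by
        rw [htdef, Finset.mul_sum, Finset.mul_sum]
        exact Finset.sum_congr rfl fun n _ => by ring
      calc (∑ n, a m * M m n * (starRingEnd ℂ) (a n))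
          = ∑ n, (a m * (((1 + P * H : ℝ) : ℂ) * (if m = n then 1 else 0))
              * (starRingEnd ℂ) (a n)
            - a m * ((P : ℂ) * ((starRingEnd ℂ) (h m) * h n)) * (starRingEnd ℂ) (a n)) := by
            refine Finset.sum_congr rfl fun n _ => ?_
            rw [hMapp]; ring
        _ = _ := by rw [Finset.sum_sub_distrib, e1, e2]
    rw [Finset.sum_congr rfl fun m _ => step m, Finset.sum_sub_distrib, ← Finset.mul_sum,
      ← Finset.mul_sum, ← Finset.sum_mul, hconjt]
    have h1 : (∑ l, a l * (starRingEnd ℂ) (a l)) = ((A : ℝ) : ℂ) := by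
      rw [hAdef]
      push_cast
      exact Finset.sum_congr rfl fun l _ => Complex.mul_conj _
    have h2 : (starRingEnd ℂ) t * t = ((Complex.normSq t : ℝ) : ℂ) := by
      rw [mul_comm, Complex.mul_conj]
    rw [h1, h2]
  have hSre : Complex.re (∑ m, ∑ n, a m * M m n * (starRingEnd ℂ) (a n))
      = (1 + P * H) * A - P * Complex.normSq t := by
    rw [hS]; simp
  rw [hSre]
  -- normalize the existential side
  have hF : ∀ α : ℂ, ‖α‖ ^ 2 + P * ∑ l, ‖α * h l - a l‖ ^ 2
      = Complex.normSq α + P * (Complex.normSq α * H - 2 * (α * t).re + A) := by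
    intro α
    rw [Complex.sq_norm]
    congr 1
    congr 1
    have : (∑ l, ‖α * h l - a l‖ ^ 2)
        = ∑ l, (Complex.normSq α * Complex.normSq (h l)
            - 2 * (α * (h l * (starRingEnd ℂ) (a l))).re + Complex.normSq (a l)) := by
      exact Finset.sum_congr rfl fun l _ => by rw [Complex.sq_norm, cf_term]
    rw [this, Finset.sum_add_distrib, Finset.sum_sub_distrib, ← Finset.mul_sum, ← hH2, ← hAdef]
    have h3 : (α * t).re = ∑ l, (α * (h l * (starRingEnd ℂ) (a l))).re := by
      rw [htdef, Finset.mul_sum, Complex.re_sum]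
    rw [h3, Finset.mul_sum _ _ (2:ℝ)]
  constructor
  · rintro ⟨α, hα⟩
    rw [hF] at hα
    have key := cf_key P H A t α
    have hnsq := Complex.normSq_nonneg
      (((1 + P * H : ℝ) : ℂ) * α - (P : ℂ) * (starRingEnd ℂ) t)
    nlinarith [mul_lt_mul_of_pos_left hα hc]
  · intro hQ
    refine ⟨((P : ℂ) * (starRingEnd ℂ) t) / ((1 + P * H : ℝ) : ℂ), ?_⟩
    set α : ℂ := ((P : ℂ) * (starRingEnd ℂ) t) / ((1 + P * H : ℝ) : ℂ) with hα
    have hcne : ((1 + P * H : ℝ) : ℂ) ≠ 0 := by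
      exact_mod_cast ne_of_gt hc
    have hzero : ((1 + P * H : ℝ) : ℂ) * α - (P : ℂ) * (starRingEnd ℂ) t = 0 := by
      rw [hα, mul_div_assoc', mul_comm, mul_div_assoc, div_self hcne, mul_one, sub_self]
    have key := cf_key P H A t α
    rw [hzero] at key
    simp only [Complex.normSq_zero, zero_add] at key
    rw [hF]
    nlinarith [mul_lt_mul_of_pos_left hQ (mul_pos hP hc)]
end

section
/- (Theorem 1, single receive antenna, Gaussian integers.) Let P > 0, h ∈ ℂ^L, M = (1 + P‖h‖²)·I_L − P·h^H h, and suppose a is a nonzero Gaussian integer vector in ℂ^L that minimizes the quadratic form a' M (a')^H over all nonzero Gaussian integer vectors a' ∈ ℂ^L. Then either a is a unit vector in ℤ[i]^L, or, setting α = P·⟨a,h⟩/(1 + P‖h‖²), for every index l the component a_l is a nearest Gaussian integer to α·h_l. -/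
open Complex Finset Matrix

/-- `z ∈ ℂ` is a Gaussian integer. -/
def IsGaussInt (z : ℂ) : Prop := ∃ m n : ℤ, z = (m : ℂ) + (n : ℂ) * Complex.I

/-- `a ∈ ℂ^L` is a Gaussian integer vector. -/
def IsGaussVec {L : ℕ} (a : Fin L → ℂ) : Prop := ∀ l, IsGaussInt (a l)

/-- `a` is a unit vector in `ℤ[i]^L`: exactly one nonzero component, equal to a
unit `1, -1, i, -i` of the Gaussian integers. -/
def IsGaussUnitVec {L : ℕ} (a : Fin L → ℂ) : Prop :=
  ∃ l₀ : Fin L, (a l₀ = 1 ∨ a l₀ = -1 ∨ a l₀ = Complex.I ∨ a l₀ = -Complex.I) ∧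
    ∀ l, l ≠ l₀ → a l = 0

/-- `g` is a nearest Gaussian integer to `x`. -/
def IsNearestGauss (x g : ℂ) : Prop :=
  IsGaussInt g ∧ ∀ g' : ℂ, IsGaussInt g' → ‖x - g‖ ≤ ‖x - g'‖

lemma quad_re_aux (L : ℕ) (P H : ℝ) (h : Fin L → ℂ) (a' : Fin L → ℂ) :
    Complex.re (∑ m, ∑ n, a' m *
      (((1 + P * H) • (1 : Matrix (Fin L) (Fin L) ℂ)
        - P • Matrix.of (fun m n => (starRingEnd ℂ) (h m) * h n)) m n) * (starRingEnd ℂ) (a' n))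
    = (1 + P * H) * (∑ l, Complex.normSq (a' l))
      - P * Complex.normSq (∑ l, a' l * (starRingEnd ℂ) (h l)) := by
  have key : (∑ m, ∑ n, a' m *
      (((1 + P * H) • (1 : Matrix (Fin L) (Fin L) ℂ)
        - P • Matrix.of (fun m n => (starRingEnd ℂ) (h m) * h n)) m n) * (starRingEnd ℂ) (a' n))
    = ((1 + P * H : ℝ) : ℂ) * ((∑ l, Complex.normSq (a' l) : ℝ) : ℂ)
      - (P : ℂ) * ((Complex.normSq (∑ l, a' l * (starRingEnd ℂ) (h l)) : ℝ) : ℂ) := by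
    simp only [Matrix.sub_apply, Matrix.smul_apply, Matrix.one_apply, Matrix.of_apply,
      real_smul, smul_eq_mul, mul_ite, mul_one, mul_zero, mul_sub, sub_mul, ite_mul, zero_mul,
      Finset.sum_sub_distrib]
    congr 1
    · simp only [Finset.sum_ite_eq, Finset.mem_univ, if_true]
      rw [Complex.ofReal_sum, Finset.mul_sum]
      refine Finset.sum_congr rfl fun x _ => ?_
      rw [← Complex.mul_conj]
      ring
    · rw [← Complex.mul_conj, map_sum]
      simp only [_root_.map_mul, Complex.conj_conj]
      rw [Finset.sum_mul_sum, Finset.mul_sum]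
      refine Finset.sum_congr rfl fun x _ => ?_
      rw [Finset.mul_sum]
      refine Finset.sum_congr rfl fun y _ => ?_
      ring
  rw [key]
  simp

lemma key_ineq (c P : ℝ) (hc : 0 < c) (hP : 0 < P) (s g al hl : ℂ)
    (H : Complex.normSq (g - ((P/c : ℝ) : ℂ) * s * hl)
       < Complex.normSq (al - ((P/c : ℝ) : ℂ) * s * hl)) :
    c * Complex.normSq g - P * Complex.normSq (s + (g - al) * (starRingEnd ℂ) hl)
      < c * Complex.normSq al - P * Complex.normSq s := by
  have hid : (c * Complex.normSq g - P * Complex.normSq (s + (g - al) * (starRingEnd ℂ) hl))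
      - (c * Complex.normSq al - P * Complex.normSq s)
      = c * (Complex.normSq (g - ((P/c : ℝ) : ℂ) * s * hl)
             - Complex.normSq (al - ((P/c : ℝ) : ℂ) * s * hl))
        - P * Complex.normSq ((g - al) * (starRingEnd ℂ) hl) := by
    simp only [Complex.normSq_apply, Complex.add_re, Complex.add_im, Complex.sub_re,
      Complex.sub_im, Complex.mul_re, Complex.mul_im, Complex.ofReal_re, Complex.ofReal_im,
      Complex.conj_re, Complex.conj_im]
    field_simp
    ring
  nlinarith [Complex.normSq_nonneg ((g - al) * (starRingEnd ℂ) hl)]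


set_option maxHeartbeats 1000000 in
/-- Theorem 1 (single receive antenna, Gaussian integers): any nonzero Gaussian
integer vector minimizing the quadratic form `a M aᴴ` with
`M = (1 + P‖h‖²)·I − P·hᴴh` is either a unit vector of `ℤ[i]^L`, or satisfies
`a = [α·h]` componentwise, where `α = P⟨a,h⟩/(1 + P‖h‖²)` is the MMSE coefficient. -/
theorem cf_opt_coeff_gaussian (L : ℕ) (P : ℝ) (hP : 0 < P) (h : Fin L → ℂ)
    (M : Matrix (Fin L) (Fin L) ℂ)
    (hM : M = (1 + P * ∑ l, ‖h l‖ ^ 2) • (1 : Matrix (Fin L) (Fin L) ℂ)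
        - P • Matrix.of (fun m n => (starRingEnd ℂ) (h m) * h n))
    (a : Fin L → ℂ) (ha : IsGaussVec a) (ha0 : a ≠ 0)
    (hmin : ∀ a' : Fin L → ℂ, IsGaussVec a' → a' ≠ 0 →
      Complex.re (∑ m, ∑ n, a m * M m n * (starRingEnd ℂ) (a n)) ≤
        Complex.re (∑ m, ∑ n, a' m * M m n * (starRingEnd ℂ) (a' n))) :
    IsGaussUnitVec a ∨
      (∀ l : Fin L,
        IsNearestGauss
          (((P : ℂ) * (∑ l', a l' * (starRingEnd ℂ) (h l')) /
              (1 + (P : ℂ) * ((∑ l', ‖h l'‖ ^ 2 : ℝ) : ℂ))) * h l)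
          (a l)) := by
  by_cases hu : IsGaussUnitVec a
  · exact Or.inl hu
  right
  subst hM
  set H : ℝ := ∑ l, ‖h l‖ ^ 2 with hH
  have hHnn : 0 ≤ H := Finset.sum_nonneg fun j _ => by positivity
  set c : ℝ := 1 + P * H with hcdef
  have hc : 0 < c := by nlinarith
  set s : ℂ := ∑ l', a l' * (starRingEnd ℂ) (h l') with hs
  have hquad : ∀ a' : Fin L → ℂ,
      Complex.re (∑ m, ∑ n, a' m *
        (((1 + P * H) • (1 : Matrix (Fin L) (Fin L) ℂ)
          - P • Matrix.of (fun m n => (starRingEnd ℂ) (h m) * h n)) m n) * (starRingEnd ℂ) (a' n))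
      = c * (∑ l, Complex.normSq (a' l))
        - P * Complex.normSq (∑ l, a' l * (starRingEnd ℂ) (h l)) :=
    fun a' => quad_re_aux L P H h a'
  intro l
  refine ⟨ha l, ?_⟩
  by_contra hcon
  push_neg at hcon
  obtain ⟨g, hg, hglt⟩ := hcon
  -- the coefficient
  have hcoe : ((P : ℂ) * s / (1 + (P : ℂ) * (H : ℂ))) = ((P / c : ℝ) : ℂ) * s := by
    rw [hcdef]
    push_cast
    ring
  have hαne : Complex.normSq (g - ((P/c : ℝ) : ℂ) * s * h l)
      < Complex.normSq (a l - ((P/c : ℝ) : ℂ) * s * h l) := by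
    have e1 : g - ((P/c : ℝ) : ℂ) * s * h l
        = -(((P : ℂ) * s / (1 + (P : ℂ) * (H : ℂ))) * h l - g) := by rw [hcoe]; ring
    have e2 : a l - ((P/c : ℝ) : ℂ) * s * h l
        = -(((P : ℂ) * s / (1 + (P : ℂ) * (H : ℂ))) * h l - a l) := by rw [hcoe]; ring
    rw [e1, e2, Complex.normSq_neg, Complex.normSq_neg, ← Complex.sq_norm, ← Complex.sq_norm]
    have h1 := norm_nonneg (((P : ℂ) * s / (1 + (P : ℂ) * (H : ℂ))) * h l - g)
    nlinarith [hglt]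
  set b : Fin L → ℂ := Function.update a l g with hb
  have hbl : b l = g := Function.update_self l g a
  have hbj : ∀ j, j ≠ l → b j = a j := fun j hj => Function.update_of_ne hj g a
  by_cases hb0 : b = 0
  · -- then a is supported on l only; derive unit vector, contradiction with hu
    have haj : ∀ j, j ≠ l → a j = 0 := by
      intro j hj
      have := congrFun hb0 j
      rwa [hbj j hj] at this
    have hal : a l ≠ 0 := by
      intro h0
      apply ha0
      funext j
      by_cases hj : j = l
      · rw [hj]; exact h0
      · exact haj j hj
    -- compare with the unit vector e_l
    have hegv : IsGaussVec (fun j => if j = l then (1:ℂ) else 0) := by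
      intro j
      dsimp only
      by_cases hj : j = l
      · rw [if_pos hj]; exact ⟨1, 0, by norm_num⟩
      · rw [if_neg hj]; exact ⟨0, 0, by norm_num⟩
    have he0 : (fun j => if j = l then (1:ℂ) else 0) ≠ 0 := by
      intro h0
      have := congrFun h0 l
      simp at this
    have hemin := hmin (fun j => if j = l then (1:ℂ) else 0) hegv he0
    rw [hquad a, hquad (fun j => if j = l then (1:ℂ) else 0)] at hemin
    -- compute the sums for a
    have hsum_a : ∑ j, Complex.normSq (a j) = Complex.normSq (a l) := by
      rw [← Finset.add_sum_erase _ _ (Finset.mem_univ l)]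
      rw [Finset.sum_eq_zero fun j hj => by
        rw [haj j (Finset.ne_of_mem_erase hj), Complex.normSq_zero]]
      ring
    have hs_a : (∑ j, a j * (starRingEnd ℂ) (h j)) = a l * (starRingEnd ℂ) (h l) := by
      rw [← Finset.add_sum_erase _ _ (Finset.mem_univ l)]
      rw [Finset.sum_eq_zero fun j hj => by
        rw [haj j (Finset.ne_of_mem_erase hj), zero_mul]]
      ring
    have hsum_e : ∑ j, Complex.normSq (if j = l then (1:ℂ) else 0) = 1 := by
      rw [← Finset.add_sum_erase _ (fun j => Complex.normSq (if j = l then (1:ℂ) else 0))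
        (Finset.mem_univ l)]
      rw [Finset.sum_eq_zero fun j hj => by
        rw [if_neg (Finset.ne_of_mem_erase hj)]; simp]
      rw [if_pos rfl]
      simp
    have hs_e : (∑ j, (if j = l then (1:ℂ) else 0) * (starRingEnd ℂ) (h j))
        = (starRingEnd ℂ) (h l) := by
      rw [← Finset.add_sum_erase _ (fun j => (if j = l then (1:ℂ) else 0) * (starRingEnd ℂ) (h j))
        (Finset.mem_univ l)]
      rw [Finset.sum_eq_zero fun j hj => by
        rw [if_neg (Finset.ne_of_mem_erase hj)]; simp]
      rw [if_pos rfl]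
      simp
    rw [hsum_a, hs_a, hsum_e, hs_e] at hemin
    have hns_conj : Complex.normSq ((starRingEnd ℂ) (h l)) = Complex.normSq (h l) :=
      Complex.normSq_conj (h l)
    rw [Complex.normSq_mul, hns_conj] at hemin
    -- c - P * normSq (h l) ≥ 1
    have hHl : Complex.normSq (h l) ≤ H := by
      rw [hH]
      have : ‖h l‖ ^ 2 = Complex.normSq (h l) := Complex.sq_norm (h l)
      rw [← this]
      exact Finset.single_le_sum (f := fun j => ‖h j‖^2)
        (fun j _ => by positivity) (Finset.mem_univ l)
    have hpos : 1 ≤ c - P * Complex.normSq (h l) := by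
      rw [hcdef]; nlinarith
    have hnsle : Complex.normSq (a l) ≤ 1 := by nlinarith
    -- a l is a Gaussian integer with 0 < normSq ≤ 1
    obtain ⟨m, n, hmn⟩ := ha l
    have hnsval : Complex.normSq (a l) = (m : ℝ)^2 + (n : ℝ)^2 := by
      have hcast : a l = ((m : ℝ) : ℂ) + ((n : ℝ) : ℂ) * Complex.I := by
        rw [hmn]; push_cast; ring
      rw [hcast, Complex.normSq_add_mul_I]
    have hint : m^2 + n^2 ≤ 1 := by
      have h2 : ((m : ℝ))^2 + ((n : ℝ))^2 ≤ 1 := by rw [← hnsval]; exact hnsle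
      exact_mod_cast h2
    have hnz : ¬(m = 0 ∧ n = 0) := by
      rintro ⟨rfl, rfl⟩
      apply hal
      rw [hmn]; norm_num
    have hm1 : -1 ≤ m ∧ m ≤ 1 := by constructor <;> nlinarith [sq_nonneg n, sq_nonneg (m+1), sq_nonneg (m-1)]
    have hn1 : -1 ≤ n ∧ n ≤ 1 := by constructor <;> nlinarith [sq_nonneg m, sq_nonneg (n+1), sq_nonneg (n-1)]
    exfalso
    apply hu
    refine ⟨l, ?_, haj⟩
    obtain ⟨hma, hmb⟩ := hm1
    obtain ⟨hna, hnb⟩ := hn1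
    interval_cases m <;> interval_cases n <;>
      (try norm_num at hint) <;> (try simp at hnz) <;> rw [hmn] <;> norm_num
  · -- b is a nonzero Gaussian vector strictly improving the objective
    have hbgv : IsGaussVec b := by
      intro j
      by_cases hj : j = l
      · subst hj; rw [hbl]; exact hg
      · rw [hbj j hj]; exact ha j
    have hble := hmin b hbgv hb0
    rw [hquad a, hquad b] at hble
    have hsum_b : ∑ j, Complex.normSq (b j)
        = (∑ j, Complex.normSq (a j)) - Complex.normSq (a l) + Complex.normSq g := by
      rw [← Finset.add_sum_erase _ (fun j => Complex.normSq (b j)) (Finset.mem_univ l),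
          ← Finset.add_sum_erase _ (fun j => Complex.normSq (a j)) (Finset.mem_univ l), hbl]
      have : ∑ j ∈ Finset.univ.erase l, Complex.normSq (b j)
          = ∑ j ∈ Finset.univ.erase l, Complex.normSq (a j) :=
        Finset.sum_congr rfl fun j hj => by rw [hbj j (Finset.ne_of_mem_erase hj)]
      rw [this]; ring
    have hs_b : (∑ j, b j * (starRingEnd ℂ) (h j)) = s + (g - a l) * (starRingEnd ℂ) (h l) := by
      rw [← Finset.add_sum_erase _ (fun j => b j * (starRingEnd ℂ) (h j)) (Finset.mem_univ l), hbl]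
      rw [hs, ← Finset.add_sum_erase _ (fun j => a j * (starRingEnd ℂ) (h j)) (Finset.mem_univ l)]
      have : ∑ j ∈ Finset.univ.erase l, b j * (starRingEnd ℂ) (h j)
          = ∑ j ∈ Finset.univ.erase l, a j * (starRingEnd ℂ) (h j) :=
        Finset.sum_congr rfl fun j hj => by rw [hbj j (Finset.ne_of_mem_erase hj)]
      rw [this]; ring
    rw [hsum_b, hs_b] at hble
    have hkey := key_ineq c P hc hP s g (a l) (h l) hαne
    nlinarith [hkey, hble]
end

section
/- (Theorem 1, single receive antenna, Eisenstein integers.) Let P > 0, h ∈ ℂ^L, M = (1 + P‖h‖²)·I_L − P·h^H h, and suppose a is a nonzero Eisenstein integer vector in ℂ^L that minimizes the quadratic form a' M (a')^H over all nonzero Eisenstein integer vectors a' ∈ ℂ^L. Then either a is a unit vector in ℤ[ω]^L, or, setting α = P·⟨a,h⟩/(1 + P‖h‖²), for every index l the component a_l is a nearest Eisenstein integer to α·h_l. -/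
open Complex Finset Matrix

/-- The primitive sixth root of unity `ω = −1/2 + i√3/2`. -/
noncomputable def eisω : ℂ := -(1 / 2) + ((Real.sqrt 3 / 2 : ℝ) : ℂ) * Complex.I

/-- `z ∈ ℂ` is an Eisenstein integer. -/
def IsEisInt (z : ℂ) : Prop := ∃ m n : ℤ, z = (m : ℂ) + (n : ℂ) * eisω

/-- `a ∈ ℂ^L` is an Eisenstein integer vector. -/
def IsEisVec {L : ℕ} (a : Fin L → ℂ) : Prop := ∀ l, IsEisInt (a l)

/-- `a` is a unit vector in `ℤ[ω]^L`: exactly one nonzero component, equal to a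
unit `±1, ±ω, ±ω²` of the Eisenstein integers. -/
def IsEisUnitVec {L : ℕ} (a : Fin L → ℂ) : Prop :=
  ∃ l₀ : Fin L,
    (a l₀ = 1 ∨ a l₀ = -1 ∨ a l₀ = eisω ∨ a l₀ = -eisω ∨
      a l₀ = eisω ^ 2 ∨ a l₀ = -eisω ^ 2) ∧
    ∀ l, l ≠ l₀ → a l = 0

/-- `e` is a nearest Eisenstein integer to `x`. -/
def IsNearestEis (x e : ℂ) : Prop :=
  IsEisInt e ∧ ∀ e' : ℂ, IsEisInt e' → ‖x - e‖ ≤ ‖x - e'‖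

lemma eisω_sq : eisω ^ 2 = -1 - eisω := by
  have h3 : ((Real.sqrt 3 : ℝ) : ℂ) ^ 2 = 3 := by
    rw [← Complex.ofReal_pow, Real.sq_sqrt] <;> norm_num
  unfold eisω; push_cast
  linear_combination (Complex.I ^ 2 / 4) * h3 + (3 / 4 : ℂ) * Complex.I_sq

lemma normSq_eis (m n : ℤ) :
    Complex.normSq ((m : ℂ) + (n : ℂ) * eisω) = (m : ℝ) ^ 2 - m * n + n ^ 2 := by
  have h3 : (Real.sqrt 3) ^ 2 = 3 := Real.sq_sqrt (by norm_num)
  simp [Complex.normSq_apply, eisω]; ring_nf; nlinarith [h3]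

lemma eis_unit (z : ℂ) (hz : IsEisInt z) (h0 : z ≠ 0) (h1 : Complex.normSq z ≤ 1) :
    z = 1 ∨ z = -1 ∨ z = eisω ∨ z = -eisω ∨ z = eisω ^ 2 ∨ z = -eisω ^ 2 := by
  obtain ⟨m, n, rfl⟩ := hz
  have h1' : (m : ℝ) ^ 2 - m * n + n ^ 2 ≤ 1 := by rw [← normSq_eis]; exact h1
  have h1z : m ^ 2 - m * n + n ^ 2 ≤ 1 := by exact_mod_cast h1'
  have hm : m ^ 2 ≤ 1 := by nlinarith
  have hn : n ^ 2 ≤ 1 := by nlinarith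
  have hm1 : -1 ≤ m ∧ m ≤ 1 :=
    abs_le.mp (by nlinarith [_root_.sq_abs m, abs_nonneg m] : |m| ≤ 1)
  have hn1 : -1 ≤ n ∧ n ≤ 1 :=
    abs_le.mp (by nlinarith [_root_.sq_abs n, abs_nonneg n] : |n| ≤ 1)
  have hsq : eisω ^ 2 = -1 - eisω := eisω_sq
  obtain ⟨hma, hmb⟩ := hm1
  obtain ⟨hna, hnb⟩ := hn1
  interval_cases m <;> interval_cases n <;>
    first
      | (exfalso; norm_num at h1z; done)
      | (exfalso; norm_num at h0; done)
      | (left; norm_num; done)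
      | (right; left; norm_num; done)
      | (right; right; left; norm_num; done)
      | (right; right; right; left; norm_num; done)
      | (right; right; right; right; right; linear_combination hsq)
      | (right; right; right; right; left; linear_combination -hsq)

lemma quad_eval (L : ℕ) (c P' : ℝ) (h x : Fin L → ℂ) :
    ∑ m, ∑ n, x m * ((c • (1 : Matrix (Fin L) (Fin L) ℂ)
        - P' • Matrix.of (fun m n => (starRingEnd ℂ) (h m) * h n)) m n) * (starRingEnd ℂ) (x n)
    = ((c * ∑ l, normSq (x l) - P' * normSq (∑ l, x l * (starRingEnd ℂ) (h l)) : ℝ) : ℂ) := by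
  have step : ∀ m, ∑ n, x m * ((c • (1 : Matrix (Fin L) (Fin L) ℂ)
        - P' • Matrix.of (fun m n => (starRingEnd ℂ) (h m) * h n)) m n) * (starRingEnd ℂ) (x n)
      = (c : ℂ) * (x m * (starRingEnd ℂ) (x m))
        - (P' : ℂ) * ((x m * (starRingEnd ℂ) (h m)) * ∑ n, h n * (starRingEnd ℂ) (x n)) := by
    intro m
    have : ∀ n, x m * ((c • (1 : Matrix (Fin L) (Fin L) ℂ)
        - P' • Matrix.of (fun m n => (starRingEnd ℂ) (h m) * h n)) m n) * (starRingEnd ℂ) (x n)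
      = (c : ℂ) * (if n = m then x m * (starRingEnd ℂ) (x m) else 0)
        - (P' : ℂ) * ((x m * (starRingEnd ℂ) (h m)) * (h n * (starRingEnd ℂ) (x n))) := by
      intro n
      simp only [Matrix.sub_apply, Matrix.smul_apply, Matrix.one_apply, Matrix.of_apply,
        Complex.real_smul, smul_eq_mul]
      by_cases hn : n = m
      · subst hn; simp; ring
      · simp [Ne.symm hn, hn]; ring
    rw [Finset.sum_congr rfl (fun n _ => this n)]
    rw [Finset.sum_sub_distrib, ← Finset.mul_sum, Finset.sum_ite_eq' (Finset.univ) m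
      (fun _ => x m * (starRingEnd ℂ) (x m)), ← Finset.mul_sum, ← Finset.mul_sum]
    simp
  rw [Finset.sum_congr rfl (fun m _ => step m)]
  rw [Finset.sum_sub_distrib, ← Finset.mul_sum, ← Finset.mul_sum, ← Finset.sum_mul]
  have h1 : ∑ m, x m * (starRingEnd ℂ) (x m) = ((∑ l, normSq (x l) : ℝ) : ℂ) := by
    push_cast; exact Finset.sum_congr rfl fun m _ => (Complex.mul_conj (x m))
  have h2 : ∑ n, h n * (starRingEnd ℂ) (x n)
      = (starRingEnd ℂ) (∑ l, x l * (starRingEnd ℂ) (h l)) := by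
    rw [map_sum]
    exact Finset.sum_congr rfl fun n _ => by rw [_root_.map_mul, Complex.conj_conj]; ring
  rw [h1, h2, Complex.mul_conj]
  push_cast; ring

lemma D_expand (L : ℕ) (h x : Fin L → ℂ) (α : ℂ) :
    ∑ l, normSq (x l - α * h l)
      = (∑ l, normSq (x l)) - 2 * ((∑ l, x l * (starRingEnd ℂ) (h l)) * (starRingEnd ℂ) α).re
        + normSq α * ∑ l, normSq (h l) := by
  have e1 : ∀ l : Fin L, normSq (x l - α * h l)
      = (normSq (x l) + normSq α * normSq (h l))
        - 2 * ((x l * (starRingEnd ℂ) (h l)) * (starRingEnd ℂ) α).re := by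
    intro l
    rw [Complex.normSq_sub, Complex.normSq_mul]
    congr 2
    rw [_root_.map_mul]
    ring_nf
  rw [Finset.sum_congr rfl (fun l _ => e1 l), Finset.sum_sub_distrib,
    Finset.sum_add_distrib, ← Finset.mul_sum, ← Finset.mul_sum, ← Complex.re_sum,
    ← Finset.sum_mul]
  ring

lemma key_ineq_s6 (P β Na Nb H : ℝ) (hP : 0 ≤ P) (sa sb α : ℂ)
    (hα : (β : ℂ) * α = (P : ℂ) * sa) :
    β * Nb - P * normSq sb ≤ β * Na - P * normSq sa
      + β * ((Nb - 2 * (sb * (starRingEnd ℂ) α).re + normSq α * H)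
        - (Na - 2 * (sa * (starRingEnd ℂ) α).re + normSq α * H)) := by
  have hc : (β : ℂ) * (starRingEnd ℂ) α = (P : ℂ) * (starRingEnd ℂ) sa := by
    have := congrArg (starRingEnd ℂ) hα
    simpa [Complex.conj_ofReal] using this
  have h1 : β * (sb * (starRingEnd ℂ) α).re = P * (sb * (starRingEnd ℂ) sa).re := by
    calc β * (sb * (starRingEnd ℂ) α).re = ((β : ℂ) * (sb * (starRingEnd ℂ) α)).re :=
          (Complex.re_ofReal_mul β _).symm
      _ = ((P : ℂ) * (sb * (starRingEnd ℂ) sa)).re := by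
          rw [show (β : ℂ) * (sb * (starRingEnd ℂ) α) = sb * ((β : ℂ) * (starRingEnd ℂ) α) by
            ring, hc]; ring_nf
      _ = P * (sb * (starRingEnd ℂ) sa).re := Complex.re_ofReal_mul P _
  have h2 : β * (sa * (starRingEnd ℂ) α).re = P * normSq sa := by
    calc β * (sa * (starRingEnd ℂ) α).re = ((β : ℂ) * (sa * (starRingEnd ℂ) α)).re :=
          (Complex.re_ofReal_mul β _).symm
      _ = ((P : ℂ) * (sa * (starRingEnd ℂ) sa)).re := by
          rw [show (β : ℂ) * (sa * (starRingEnd ℂ) α) = sa * ((β : ℂ) * (starRingEnd ℂ) α) by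
            ring, hc]; ring_nf
      _ = P * normSq sa := by rw [Complex.mul_conj]; simp
  have h5 : 0 ≤ P * (normSq sb + normSq sa - 2 * (sb * (starRingEnd ℂ) sa).re) := by
    rw [← Complex.normSq_sub]; exact mul_nonneg hP (Complex.normSq_nonneg _)
  nlinarith [h1, h2, h5]

/-- Theorem 1 (single receive antenna, Eisenstein integers): any nonzero Eisenstein
integer vector minimizing the quadratic form `a M aᴴ` with
`M = (1 + P‖h‖²)·I − P·hᴴh` is either a unit vector of `ℤ[ω]^L`, or satisfies
`a = [α·h]_{ℤ[ω]}` componentwise, where `α = P⟨a,h⟩/(1 + P‖h‖²)`. -/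
theorem cf_opt_coeff_eisenstein (L : ℕ) (P : ℝ) (hP : 0 < P) (h : Fin L → ℂ)
    (M : Matrix (Fin L) (Fin L) ℂ)
    (hM : M = (1 + P * ∑ l, ‖h l‖ ^ 2) • (1 : Matrix (Fin L) (Fin L) ℂ)
        - P • Matrix.of (fun m n => (starRingEnd ℂ) (h m) * h n))
    (a : Fin L → ℂ) (ha : IsEisVec a) (ha0 : a ≠ 0)
    (hmin : ∀ a' : Fin L → ℂ, IsEisVec a' → a' ≠ 0 →
      Complex.re (∑ m, ∑ n, a m * M m n * (starRingEnd ℂ) (a n)) ≤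
        Complex.re (∑ m, ∑ n, a' m * M m n * (starRingEnd ℂ) (a' n))) :
    IsEisUnitVec a ∨
      (∀ l : Fin L,
        IsNearestEis
          (((P : ℂ) * (∑ l', a l' * (starRingEnd ℂ) (h l')) /
              (1 + (P : ℂ) * ((∑ l', ‖h l'‖ ^ 2 : ℝ) : ℂ))) * h l)
          (a l)) := by
  set H : ℝ := ∑ l, ‖h l‖ ^ 2 with hHdef
  have hHn : H = ∑ l, normSq (h l) := by
    rw [hHdef]; exact Finset.sum_congr rfl fun l _ => Complex.sq_norm (h l)
  have hH0 : 0 ≤ H := by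
    rw [hHn]; exact Finset.sum_nonneg fun l _ => Complex.normSq_nonneg _
  set β : ℝ := 1 + P * H with hβdef
  have hβpos : 0 < β := by rw [hβdef]; nlinarith
  have fval : ∀ x : Fin L → ℂ,
      Complex.re (∑ m, ∑ n, x m * M m n * (starRingEnd ℂ) (x n))
        = β * (∑ l, normSq (x l)) - P * normSq (∑ l, x l * (starRingEnd ℂ) (h l)) := by
    intro x
    rw [hM, quad_eval]
    exact Complex.ofReal_re _
  set α : ℂ := (P : ℂ) * (∑ l', a l' * (starRingEnd ℂ) (h l')) / ((β : ℝ) : ℂ) with hαdef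
  have hβC : ((β : ℝ) : ℂ) ≠ 0 := Complex.ofReal_ne_zero.mpr hβpos.ne'
  have hαeq : ((β : ℝ) : ℂ) * α = (P : ℂ) * (∑ l', a l' * (starRingEnd ℂ) (h l')) := by
    rw [hαdef]; field_simp
  have hden : (1 + (P : ℂ) * ((H : ℝ) : ℂ)) = ((β : ℝ) : ℂ) := by
    rw [hβdef]; push_cast; ring
  -- key comparison
  have cmp : ∀ b : Fin L → ℂ, IsEisVec b → b ≠ 0 →
      (∑ l, normSq (b l - α * h l)) < (∑ l, normSq (a l - α * h l)) → False := by
    intro b hbe hb0 hlt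
    have h1 := hmin b hbe hb0
    rw [fval a, fval b] at h1
    have h2 := key_ineq_s6 P β (∑ l, normSq (a l)) (∑ l, normSq (b l)) H hP.le
      (∑ l', a l' * (starRingEnd ℂ) (h l')) (∑ l', b l' * (starRingEnd ℂ) (h l')) α hαeq
    rw [D_expand, D_expand, ← hHn] at hlt
    have h3 := mul_pos hβpos (sub_pos.mpr hlt)
    linarith
  by_cases hu : IsEisUnitVec a
  · exact Or.inl hu
  right
  intro l
  rw [hden, show (P : ℂ) * (∑ l', a l' * (starRingEnd ℂ) (h l')) / ((β : ℝ) : ℂ) * h l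
      = α * h l from rfl]
  refine ⟨ha l, ?_⟩
  intro e' he'
  by_contra hcon
  push_neg at hcon
  have hlt2 : normSq (α * h l - e') < normSq (α * h l - a l) := by
    rw [← Complex.sq_norm, ← Complex.sq_norm]
    exact pow_lt_pow_left₀ hcon (norm_nonneg _) two_ne_zero
  set b : Fin L → ℂ := Function.update a l e' with hbdef
  have hbe : IsEisVec b := by
    intro l'
    by_cases hl' : l' = l
    · subst hl'; simpa [hbdef] using he'
    · simpa [hbdef, Function.update_of_ne hl'] using ha l'
  by_cases hb0 : b = 0
  · -- degenerate case: a is supported at l only; show it is a unit vector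
    have hal0 : ∀ l', l' ≠ l → a l' = 0 := by
      intro l' hl'
      have := congrFun hb0 l'
      simpa [hbdef, Function.update_of_ne hl'] using this
    have hane : a l ≠ 0 := by
      intro h0
      apply ha0
      funext l'
      by_cases hl' : l' = l
      · subst hl'; exact h0
      · exact hal0 l' hl'
    have hue : IsEisVec (fun l' => if l' = l then (1 : ℂ) else 0) := by
      intro l'
      by_cases hl' : l' = l <;> simp [hl']
      · exact ⟨1, 0, by push_cast; ring⟩
      · exact ⟨0, 0, by push_cast; ring⟩
    have hu0 : (fun l' => if l' = l then (1 : ℂ) else 0) ≠ 0 := by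
      intro hc
      have := congrFun hc l
      simp at this
    have hmu := hmin _ hue hu0
    rw [fval a, fval _] at hmu
    have hNu : (∑ l', normSq (if l' = l then (1 : ℂ) else 0)) = 1 := by
      simp [apply_ite Complex.normSq]
    have hSu : (∑ l', (if l' = l then (1 : ℂ) else 0) * (starRingEnd ℂ) (h l'))
        = (starRingEnd ℂ) (h l) := by
      simp [ite_mul]
    have hNa : (∑ l', normSq (a l')) = normSq (a l) :=
      Finset.sum_eq_single l (fun l' _ hl' => by rw [hal0 l' hl']; simp) (by simp)
    have hSa : (∑ l', a l' * (starRingEnd ℂ) (h l')) = a l * (starRingEnd ℂ) (h l) :=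
      Finset.sum_eq_single l (fun l' _ hl' => by rw [hal0 l' hl']; ring) (by simp)
    rw [hNu, hSu, hNa, hSa] at hmu
    have hprod : normSq (a l * (starRingEnd ℂ) (h l)) = normSq (a l) * normSq (h l) := by
      rw [Complex.normSq_mul, Complex.normSq_conj]
    rw [hprod, Complex.normSq_conj] at hmu
    have hhl : normSq (h l) ≤ H := by
      rw [hHn]
      exact Finset.single_le_sum (fun i _ => Complex.normSq_nonneg _) (Finset.mem_univ l)
    have hcpos : 0 < β - P * normSq (h l) := by rw [hβdef]; nlinarith
    have hle1 : normSq (a l) ≤ 1 := by nlinarith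
    exact hu ⟨l, eis_unit (a l) (ha l) hane hle1, hal0⟩
  · -- nondegenerate case: modifying coordinate l strictly decreases the quadratic form
    apply cmp b hbe hb0
    have hsplit : ∀ x : Fin L → ℂ, ∑ l', normSq (x l' - α * h l')
        = normSq (x l - α * h l) + ∑ l' ∈ Finset.univ.erase l, normSq (x l' - α * h l') :=
      fun x => (Finset.add_sum_erase Finset.univ _ (Finset.mem_univ l)).symm
    rw [hsplit a, hsplit b]
    have heq : ∑ l' ∈ Finset.univ.erase l, normSq (b l' - α * h l')
        = ∑ l' ∈ Finset.univ.erase l, normSq (a l' - α * h l') :=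
      Finset.sum_congr rfl fun l' hl' => by
        rw [hbdef, Function.update_of_ne (Finset.ne_of_mem_erase hl')]
    have hbl : b l = e' := by rw [hbdef]; exact Function.update_self l e' a
    rw [heq, hbl]
    have h1 : normSq (e' - α * h l) = normSq (α * h l - e') := by
      rw [show e' - α * h l = -(α * h l - e') by ring, Complex.normSq_neg]
    have h2 : normSq (a l - α * h l) = normSq (α * h l - a l) := by
      rw [show a l - α * h l = -(α * h l - a l) by ring, Complex.normSq_neg]
    rw [h1, h2]
    linarith
end

section
/- (Theorem 1, MIMO compute-and-forward, Gaussian integers.) Let P > 0 and let H be a k×L complex matrix. Suppose b ∈ ℂ^k and a is a nonzero Gaussian integer vector in ℂ^L such that ‖b‖² + P·‖bH − a‖² ≤ ‖b'‖² + P·‖b'H − a'‖² for every b' ∈ ℂ^k and every nonzero Gaussian integer vector a' ∈ ℂ^L. Then either a is a unit vector in ℤ[i]^L, or for every index l the component a_l is a nearest Gaussian integer to (bH)_l. -/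
open Complex Finset Matrix

/- ### Auxiliary lemmas -/

lemma poly_core_aux (S K p q : ℝ) (hp : 0 ≤ p) (hq : 0 ≤ q) (hS : 2 ≤ S)
    (hpq : p^2 + q^2 = S) (hmain : S - K ≤ (1-K)*(p+q)) (hK1 : K ≤ 1) : K ≤ 0 := by
  have hT : (p+q)^2 ≤ 2*S := by nlinarith [sq_nonneg (p-q)]
  have hTS : p + q ≤ S := by nlinarith [add_nonneg hp hq]
  nlinarith [mul_nonneg (by linarith : (0:ℝ) ≤ 1-K) (by linarith : (0:ℝ) ≤ S - (p+q))]

lemma poly_main_aux (A B c d : ℝ) (hS : 2 ≤ c^2+d^2)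
    (h1 : c^2+d^2-2*A*c-2*B*d ≤ 1-2*A)
    (h2 : c^2+d^2-2*A*c-2*B*d ≤ 1+2*A)
    (h3 : c^2+d^2-2*A*c-2*B*d ≤ 1-2*B)
    (h4 : c^2+d^2-2*A*c-2*B*d ≤ 1+2*B) :
    c^2+d^2-2*A*c-2*B*d ≤ 0 := by
  set K := c^2+d^2-2*A*c-2*B*d with hK
  have hK1 : K ≤ 1 := by linarith
  rcases le_or_gt 0 c with hc | hc <;> rcases le_or_gt 0 d with hd | hd
  · exact poly_core_aux (c^2+d^2) K c d hc hd hS rfl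
      (by nlinarith [mul_nonneg (show (0:ℝ) ≤ 1-K-2*A by linarith) hc,
        mul_nonneg (show (0:ℝ) ≤ 1-K-2*B by linarith) hd]) hK1
  · exact poly_core_aux (c^2+d^2) K c (-d) hc (by linarith) hS (by ring)
      (by nlinarith [mul_nonneg (show (0:ℝ) ≤ 1-K-2*A by linarith) hc,
        mul_nonneg (show (0:ℝ) ≤ 1-K+2*B by linarith) (show (0:ℝ) ≤ -d by linarith)]) hK1
  · exact poly_core_aux (c^2+d^2) K (-c) d (by linarith) hd hS (by ring)
      (by nlinarith [mul_nonneg (show (0:ℝ) ≤ 1-K+2*A by linarith) (show (0:ℝ) ≤ -c by linarith),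
        mul_nonneg (show (0:ℝ) ≤ 1-K-2*B by linarith) hd]) hK1
  · exact poly_core_aux (c^2+d^2) K (-c) (-d) (by linarith) (by linarith) hS (by ring)
      (by nlinarith [mul_nonneg (show (0:ℝ) ≤ 1-K+2*A by linarith) (show (0:ℝ) ≤ -c by linarith),
        mul_nonneg (show (0:ℝ) ≤ 1-K+2*B by linarith) (show (0:ℝ) ≤ -d by linarith)]) hK1

lemma abs_le_abs_of_normSq_aux {z w : ℂ} (h : Complex.normSq z ≤ Complex.normSq w) :
    ‖z‖ ≤ ‖w‖ := by
  rw [Complex.norm_def, Complex.norm_def]; exact Real.sqrt_le_sqrt h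

lemma normSq_sub_aux (x w : ℂ) :
    Complex.normSq (x - w) = (x.re - w.re)^2 + (x.im - w.im)^2 := by
  simp [Complex.normSq_apply, Complex.sub_re, Complex.sub_im]
  ring

lemma gauss_re_aux (m n : ℤ) : ((m:ℂ) + (n:ℂ) * Complex.I).re = (m:ℝ) := by simp

lemma gauss_im_aux (m n : ℤ) : ((m:ℂ) + (n:ℂ) * Complex.I).im = (n:ℝ) := by simp

lemma gauss_eq_zero_iff_aux (m n : ℤ) :
    (m:ℂ) + (n:ℂ) * Complex.I = 0 ↔ m = 0 ∧ n = 0 := by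
  constructor
  · intro h
    have hre := congrArg Complex.re h
    have him := congrArg Complex.im h
    rw [gauss_re_aux] at hre
    rw [gauss_im_aux] at him
    simp at hre him
    exact ⟨hre, him⟩
  · rintro ⟨rfl, rfl⟩; simp

lemma gauss_sq_ge_two_aux (m n : ℤ) (h0 : ¬(m = 0 ∧ n = 0)) (h1 : ¬(m = 1 ∧ n = 0))
    (h2 : ¬(m = -1 ∧ n = 0)) (h3 : ¬(m = 0 ∧ n = 1)) (h4 : ¬(m = 0 ∧ n = -1)) :
    2 ≤ m^2 + n^2 := by
  by_contra hcon
  push_neg at hcon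
  have hm : m^2 ≤ 1 := by nlinarith [sq_nonneg n]
  have hn : n^2 ≤ 1 := by nlinarith [sq_nonneg m]
  have hm1 : -1 ≤ m := by nlinarith [sq_nonneg (m+1)]
  have hm2 : m ≤ 1 := by nlinarith [sq_nonneg (m-1)]
  have hn1 : -1 ≤ n := by nlinarith [sq_nonneg (n+1)]
  have hn2 : n ≤ 1 := by nlinarith [sq_nonneg (n-1)]
  interval_cases m <;> interval_cases n <;> simp_all

/-- Key comparison: replacing `a l` by a Gaussian integer `c` (keeping the vector
nonzero) cannot decrease the objective, hence the `l`-th term satisfies the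
corresponding inequality. -/
lemma compare_step_aux (k L : ℕ) (P : ℝ) (hP : 0 < P)
    (H : Matrix (Fin k) (Fin L) ℂ) (b : Fin k → ℂ)
    (a : Fin L → ℂ) (ha : IsGaussVec a)
    (hmin : ∀ (b' : Fin k → ℂ) (a' : Fin L → ℂ), IsGaussVec a' → a' ≠ 0 →
      (∑ j, ‖b j‖ ^ 2) +
          P * ∑ l, ‖Matrix.vecMul b H l - a l‖ ^ 2 ≤
        (∑ j, ‖b' j‖ ^ 2) +
          P * ∑ l, ‖Matrix.vecMul b' H l - a' l‖ ^ 2)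
    (l : Fin L) (c : ℂ) (hc : IsGaussInt c) (h0 : Function.update a l c ≠ 0) :
    Complex.normSq (Matrix.vecMul b H l - a l) ≤ Complex.normSq (Matrix.vecMul b H l - c) := by
  have hg : IsGaussVec (Function.update a l c) := by
    intro j
    by_cases hj : j = l
    · subst hj; simpa using hc
    · rw [Function.update_of_ne hj]; exact ha j
  have h := hmin b (Function.update a l c) hg h0
  have hsplit : ∀ v : Fin L → ℂ,
      ∑ l', ‖Matrix.vecMul b H l' - v l'‖ ^ 2
        = ‖Matrix.vecMul b H l - v l‖ ^ 2
          + ∑ l' ∈ Finset.univ.erase l, ‖Matrix.vecMul b H l' - v l'‖ ^ 2 :=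
    fun v => (Finset.add_sum_erase _ _ (Finset.mem_univ l)).symm
  rw [hsplit a, hsplit (Function.update a l c)] at h
  have heq : ∑ l' ∈ Finset.univ.erase l,
      ‖Matrix.vecMul b H l' - Function.update a l c l'‖ ^ 2
      = ∑ l' ∈ Finset.univ.erase l, ‖Matrix.vecMul b H l' - a l'‖ ^ 2 := by
    refine Finset.sum_congr rfl fun j hj => ?_
    rw [Function.update_of_ne (Finset.ne_of_mem_erase hj)]
  rw [heq, Function.update_self] at h
  have h2 := (add_le_add_iff_left (∑ j, ‖b j‖ ^ 2)).mp h
  have h3 := le_of_mul_le_mul_left h2 hP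
  have h4 := (add_le_add_iff_right
    (∑ l' ∈ Finset.univ.erase l, ‖Matrix.vecMul b H l' - a l'‖ ^ 2)).mp h3
  rw [← Complex.sq_norm, ← Complex.sq_norm]
  exact h4

/-- Theorem 1 (MIMO compute-and-forward, Gaussian integers): if `(b, a)` minimizes
`‖b‖² + P‖bH − a‖²` over all `b' ∈ ℂ^k` and all nonzero Gaussian integer vectors
`a' ∈ ℂ^L`, then either `a` is a unit vector in `ℤ[i]^L`, or `a = [bH]`
componentwise. -/
theorem mimo_cf_opt_coeff_gaussian (k L : ℕ) (P : ℝ) (hP : 0 < P)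
    (H : Matrix (Fin k) (Fin L) ℂ) (b : Fin k → ℂ)
    (a : Fin L → ℂ) (ha : IsGaussVec a) (ha0 : a ≠ 0)
    (hmin : ∀ (b' : Fin k → ℂ) (a' : Fin L → ℂ), IsGaussVec a' → a' ≠ 0 →
      (∑ j, ‖b j‖ ^ 2) +
          P * ∑ l, ‖Matrix.vecMul b H l - a l‖ ^ 2 ≤
        (∑ j, ‖b' j‖ ^ 2) +
          P * ∑ l, ‖Matrix.vecMul b' H l - a' l‖ ^ 2) :
    IsGaussUnitVec a ∨
      (∀ l : Fin L, IsNearestGauss (Matrix.vecMul b H l) (a l)) := by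
  by_cases hu : IsGaussUnitVec a
  · exact Or.inl hu
  right
  intro l
  refine ⟨ha l, ?_⟩
  rintro g' ⟨m', n', rfl⟩
  apply abs_le_abs_of_normSq_aux
  by_cases h0 : Function.update a l
      ((↑(round (Matrix.vecMul b H l).re) : ℂ)
        + (↑(round (Matrix.vecMul b H l).im) : ℂ) * Complex.I) = 0
  · -- Case B : the rounded vector is zero
    set x := Matrix.vecMul b H l with hx
    have hg0 : (↑(round x.re) : ℂ) + (↑(round x.im) : ℂ) * Complex.I = 0 := by
      have := congrFun h0 l
      rwa [Function.update_self] at this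
    have hoff : ∀ j, j ≠ l → a j = 0 := by
      intro j hj
      have := congrFun h0 j
      rwa [Function.update_of_ne hj] at this
    have hal0 : a l ≠ 0 := by
      intro hcon
      apply ha0
      funext j
      by_cases hj : j = l
      · subst hj; exact hcon
      · exact hoff j hj
    have hnotunit : ¬(a l = 1 ∨ a l = -1 ∨ a l = Complex.I ∨ a l = -Complex.I) :=
      fun hcon => hu ⟨l, hcon, hoff⟩
    obtain ⟨mc, nc, hal⟩ := ha l
    have hre : (a l).re = (mc:ℝ) := by rw [hal]; exact gauss_re_aux mc nc
    have him : (a l).im = (nc:ℝ) := by rw [hal]; exact gauss_im_aux mc nc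
    -- integer exclusions
    have hx0 : ¬(mc = 0 ∧ nc = 0) := by
      rintro ⟨rfl, rfl⟩; apply hal0; rw [hal]; norm_num
    have hx1 : ¬(mc = 1 ∧ nc = 0) := by
      rintro ⟨rfl, rfl⟩; apply hnotunit; left; rw [hal]; norm_num
    have hx2 : ¬(mc = -1 ∧ nc = 0) := by
      rintro ⟨rfl, rfl⟩; apply hnotunit; right; left; rw [hal]; norm_num
    have hx3 : ¬(mc = 0 ∧ nc = 1) := by
      rintro ⟨rfl, rfl⟩; apply hnotunit; right; right; left; rw [hal]; norm_num
    have hx4 : ¬(mc = 0 ∧ nc = -1) := by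
      rintro ⟨rfl, rfl⟩; apply hnotunit; right; right; right; rw [hal]; norm_num
    have hS : 2 ≤ (mc:ℝ)^2 + (nc:ℝ)^2 := by
      exact_mod_cast gauss_sq_ge_two_aux mc nc hx0 hx1 hx2 hx3 hx4
    -- four unit comparisons
    have hupd_ne : ∀ u : ℂ, u ≠ 0 → Function.update a l u ≠ 0 := by
      intro u hu0 hcon
      have := congrFun hcon l
      rw [Function.update_self] at this
      exact hu0 this
    have eu1 : Complex.normSq (x - a l) ≤ Complex.normSq (x - 1) := by
      rw [hx]
      exact compare_step_aux k L P hP H b a ha hmin l 1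
        ⟨1, 0, by norm_num⟩ (hupd_ne 1 one_ne_zero)
    have eu2 : Complex.normSq (x - a l) ≤ Complex.normSq (x - (-1)) := by
      rw [hx]
      exact compare_step_aux k L P hP H b a ha hmin l (-1)
        ⟨-1, 0, by norm_num⟩ (hupd_ne (-1) (by norm_num))
    have eu3 : Complex.normSq (x - a l) ≤ Complex.normSq (x - Complex.I) := by
      rw [hx]
      exact compare_step_aux k L P hP H b a ha hmin l Complex.I
        ⟨0, 1, by norm_num⟩ (hupd_ne Complex.I Complex.I_ne_zero)
    have eu4 : Complex.normSq (x - a l) ≤ Complex.normSq (x - (-Complex.I)) := by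
      rw [hx]
      exact compare_step_aux k L P hP H b a ha hmin l (-Complex.I)
        ⟨0, -1, by norm_num⟩ (hupd_ne (-Complex.I) (neg_ne_zero.mpr Complex.I_ne_zero))
    rw [normSq_sub_aux, hre, him] at eu1 eu2 eu3 eu4
    simp only [Complex.one_re, Complex.one_im, Complex.neg_re, Complex.neg_im,
      Complex.I_re, Complex.I_im, normSq_sub_aux] at eu1 eu2 eu3 eu4
    have h1' : (mc:ℝ)^2+(nc:ℝ)^2-2*x.re*mc-2*x.im*nc ≤ 1-2*x.re := by nlinarith [eu1]
    have h2' : (mc:ℝ)^2+(nc:ℝ)^2-2*x.re*mc-2*x.im*nc ≤ 1+2*x.re := by nlinarith [eu2]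
    have h3' : (mc:ℝ)^2+(nc:ℝ)^2-2*x.re*mc-2*x.im*nc ≤ 1-2*x.im := by nlinarith [eu3]
    have h4' : (mc:ℝ)^2+(nc:ℝ)^2-2*x.re*mc-2*x.im*nc ≤ 1+2*x.im := by nlinarith [eu4]
    have hpoly := poly_main_aux x.re x.im (mc:ℝ) (nc:ℝ) hS h1' h2' h3' h4'
    -- conclude for the target Gaussian g' = m' + n' I
    by_cases hz : m' = 0 ∧ n' = 0
    · obtain ⟨rfl, rfl⟩ := hz
      rw [normSq_sub_aux, normSq_sub_aux, hre, him, gauss_re_aux, gauss_im_aux]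
      push_cast
      nlinarith [hpoly]
    · have hgne : (↑m' : ℂ) + (↑n' : ℂ) * Complex.I ≠ 0 := by
        rw [Ne, gauss_eq_zero_iff_aux]; exact hz
      exact compare_step_aux k L P hP H b a ha hmin l _
        ⟨m', n', rfl⟩ (hupd_ne _ hgne)
  · -- Case A : the rounded vector is nonzero; `a l` is at most as far as the rounding
    set x := Matrix.vecMul b H l with hx
    have hkey : Complex.normSq (x - a l) ≤ Complex.normSq
        (x - ((↑(round x.re) : ℂ) + (↑(round x.im) : ℂ) * Complex.I)) := by
      rw [hx]
      exact compare_step_aux k L P hP H b a ha hmin l _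
        ⟨round (Matrix.vecMul b H l).re, round (Matrix.vecMul b H l).im, rfl⟩ h0
    refine le_trans hkey ?_
    rw [normSq_sub_aux, normSq_sub_aux, gauss_re_aux, gauss_im_aux, gauss_re_aux, gauss_im_aux]
    have r1 : (x.re - (round x.re : ℝ))^2 ≤ (x.re - (m' : ℝ))^2 := by
      calc (x.re - (round x.re : ℝ))^2 = |x.re - (round x.re : ℝ)|^2 := (_root_.sq_abs _).symm
        _ ≤ |x.re - (m' : ℝ)|^2 := pow_le_pow_left₀ (abs_nonneg _) (round_le x.re m') 2
        _ = (x.re - (m' : ℝ))^2 := _root_.sq_abs _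
    have r2 : (x.im - (round x.im : ℝ))^2 ≤ (x.im - (n' : ℝ))^2 := by
      calc (x.im - (round x.im : ℝ))^2 = |x.im - (round x.im : ℝ)|^2 := (_root_.sq_abs _).symm
        _ ≤ |x.im - (n' : ℝ)|^2 := pow_le_pow_left₀ (abs_nonneg _) (round_le x.im n') 2
        _ = (x.im - (n' : ℝ))^2 := _root_.sq_abs _
    exact add_le_add r1 r2
end

section
/- (Theorem 1, MIMO compute-and-forward, Eisenstein integers.) Let P > 0 and let H be a k×L complex matrix. Suppose b ∈ ℂ^k and a is a nonzero Eisenstein integer vector in ℂ^L such that ‖b‖² + P·‖bH − a‖² ≤ ‖b'‖² + P·‖b'H − a'‖² for every b' ∈ ℂ^k and every nonzero Eisenstein integer vector a' ∈ ℂ^L. Then either a is a unit vector in ℤ[ω]^L, or for every index l the component a_l is a nearest Eisenstein integer to (bH)_l. -/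
open Complex Finset Matrix

lemma heis : eisω ^ 2 + eisω + 1 = 0 := by
  have h3 : ((Real.sqrt 3 : ℝ) : ℂ) ^ 2 = 3 := by
    rw [← Complex.ofReal_pow, Real.sq_sqrt (by norm_num : (3:ℝ) ≥ 0)]; norm_num
  have hI : (Complex.I) ^ 2 = -1 := Complex.I_sq
  unfold eisω
  push_cast
  linear_combination (Complex.I ^ 2 / 4) * h3 + (3 / 4) * hI

lemma eis_normSq (m n : ℤ) :
    Complex.normSq ((m : ℂ) + (n : ℂ) * eisω) = ((m^2 - m*n + n^2 : ℤ) : ℝ) := by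
  have h3 : Real.sqrt 3 ^ 2 = 3 := Real.sq_sqrt (by norm_num)
  simp [Complex.normSq_apply, eisω, Complex.add_re, Complex.add_im]
  ring_nf
  rw [h3]; ring

lemma eis_unit_of_small {z : ℂ} (hz : IsEisInt z) (h0 : z ≠ 0)
    (h1 : ‖z‖ ^ 2 ≤ 1) :
    z = 1 ∨ z = -1 ∨ z = eisω ∨ z = -eisω ∨ z = eisω ^ 2 ∨ z = -eisω ^ 2 := by
  obtain ⟨m, n, rfl⟩ := hz
  have hq : ‖(m : ℂ) + (n : ℂ) * eisω‖ ^ 2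
      = ((m^2 - m*n + n^2 : ℤ) : ℝ) := by
    rw [Complex.sq_norm, eis_normSq]
  rw [hq] at h1
  have h1' : m^2 - m*n + n^2 ≤ 1 := by exact_mod_cast h1
  have hmn : m ≠ 0 ∨ n ≠ 0 := by
    by_contra hc; push_neg at hc; exact h0 (by simp [hc.1, hc.2])
  have h4 : 4*(m^2-m*n+n^2) = (2*m-n)^2 + 3*n^2 := by ring
  have hpos : 0 < m^2 - m*n + n^2 := by
    rcases eq_or_ne n 0 with hn0 | hn0
    · have hm0 : m ≠ 0 := by tauto
      have : 1 ≤ m^2 := by rcases hm0.lt_or_gt with h|h <;> nlinarith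
      nlinarith
    · have : 1 ≤ n^2 := by rcases hn0.lt_or_gt with h|h <;> nlinarith
      nlinarith [sq_nonneg (2*m-n)]
  have heq : m^2 - m*n + n^2 = 1 := le_antisymm h1' hpos
  have hm : -1 ≤ m ∧ m ≤ 1 := by
    constructor <;> nlinarith [sq_nonneg (m - n), sq_nonneg (m + n), sq_nonneg n]
  have hn : -1 ≤ n ∧ n ≤ 1 := by
    constructor <;> nlinarith [sq_nonneg (m - n), sq_nonneg (m + n), sq_nonneg m]
  obtain ⟨hm1, hm2⟩ := hm; obtain ⟨hn1, hn2⟩ := hn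
  interval_cases m <;> interval_cases n
  · exact Or.inr (Or.inr (Or.inr (Or.inr (Or.inl (by push_cast; linear_combination -heis)))))
  · exact Or.inr (Or.inl (by push_cast; ring))
  · exfalso; norm_num at heq
  · exact Or.inr (Or.inr (Or.inr (Or.inl (by push_cast; ring))))
  · exfalso; norm_num at heq
  · exact Or.inr (Or.inr (Or.inl (by push_cast; ring)))
  · exfalso; norm_num at heq
  · exact Or.inl (by push_cast; ring)
  · exact Or.inr (Or.inr (Or.inr (Or.inr (Or.inr (by push_cast; linear_combination heis)))))

/-- Theorem 1 (MIMO compute-and-forward, Eisenstein integers): if `(b, a)` minimizes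
`‖b‖² + P‖bH − a‖²` over all `b' ∈ ℂ^k` and all nonzero Eisenstein integer vectors
`a' ∈ ℂ^L`, then either `a` is a unit vector in `ℤ[ω]^L`, or `a = [bH]_{ℤ[ω]}`
componentwise. -/
theorem mimo_cf_opt_coeff_eisenstein (k L : ℕ) (P : ℝ) (hP : 0 < P)
    (H : Matrix (Fin k) (Fin L) ℂ) (b : Fin k → ℂ)
    (a : Fin L → ℂ) (ha : IsEisVec a) (ha0 : a ≠ 0)
    (hmin : ∀ (b' : Fin k → ℂ) (a' : Fin L → ℂ), IsEisVec a' → a' ≠ 0 →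
      (∑ j, ‖b j‖ ^ 2) +
          P * ∑ l, ‖Matrix.vecMul b H l - a l‖ ^ 2 ≤
        (∑ j, ‖b' j‖ ^ 2) +
          P * ∑ l, ‖Matrix.vecMul b' H l - a' l‖ ^ 2) :
    IsEisUnitVec a ∨
      (∀ l : Fin L, IsNearestEis (Matrix.vecMul b H l) (a l)) := by
  by_cases hnear : ∀ l, IsNearestEis (Matrix.vecMul b H l) (a l)
  · exact Or.inr hnear
  left
  push_neg at hnear
  obtain ⟨l, hl⟩ := hnear
  have hbad : ∃ e' : ℂ, IsEisInt e' ∧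
      ‖Matrix.vecMul b H l - e'‖ < ‖Matrix.vecMul b H l - a l‖ := by
    by_contra hc
    push_neg at hc
    exact hl ⟨ha l, fun e' he' => hc e' he'⟩
  obtain ⟨e', he'int, hlt⟩ := hbad
  have habs_pos : 0 < ‖Matrix.vecMul b H l - a l‖ :=
    lt_of_le_of_lt (norm_nonneg _) hlt
  set B := ∑ j, ‖b j‖ ^ 2 with hB
  set S := ∑ i, ‖Matrix.vecMul b H i - a i‖ ^ 2 with hS
  have hBnn : 0 ≤ B := Finset.sum_nonneg fun j _ => by positivity
  have hSpos : 0 < S := by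
    have h1 : ‖Matrix.vecMul b H l - a l‖ ^ 2 ≤ S :=
      Finset.single_le_sum (f := fun i => ‖Matrix.vecMul b H i - a i‖ ^ 2)
        (fun i _ => by positivity) (Finset.mem_univ l)
    nlinarith
  by_cases h0 : Function.update a l e' = 0
  · -- a is supported only at l; show it is a unit vector
    have hzero : ∀ i, i ≠ l → a i = 0 := by
      intro i hi
      have h := congrFun h0 i
      rwa [Function.update_of_ne hi] at h
    have hal : a l ≠ 0 := by
      intro h
      apply ha0; funext i
      by_cases hi : i = l
      · rw [hi, h]; rfl
      · exact hzero i hi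
    set c := (a l)⁻¹ with hc
    have hca : c * a l = 1 := inv_mul_cancel₀ hal
    have heisu : IsEisVec (fun i : Fin L => if i = l then (1:ℂ) else 0) := by
      intro i
      by_cases hi : i = l <;> simp [hi, IsEisInt]
      · exact ⟨1, 0, by push_cast; ring⟩
      · exact ⟨0, 0, by push_cast; ring⟩
    have hune : (fun i : Fin L => if i = l then (1:ℂ) else 0) ≠ 0 := by
      intro h
      have := congrFun h l
      simp at this
    have key := hmin (c • b) (fun i => if i = l then (1:ℂ) else 0) heisu hune
    have hvm : Matrix.vecMul (c • b) H = c • Matrix.vecMul b H := by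
      rw [Matrix.smul_vecMul]
    have hB' : (∑ j, ‖(c • b) j‖ ^ 2) = ‖c‖ ^ 2 * B := by
      rw [hB, Finset.mul_sum]
      refine Finset.sum_congr rfl fun j _ => ?_
      simp [mul_pow, norm_mul]
    have hS' : (∑ i, ‖Matrix.vecMul (c • b) H i -
        (if i = l then (1:ℂ) else 0)‖ ^ 2) = ‖c‖ ^ 2 * S := by
      rw [hS, Finset.mul_sum]
      refine Finset.sum_congr rfl fun i _ => ?_
      rw [hvm]
      by_cases hi : i = l
      · subst hi
        have : c * Matrix.vecMul b H i - 1 = c * (Matrix.vecMul b H i - a i) := by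
          rw [mul_sub, hca]
        simp only [Pi.smul_apply, smul_eq_mul, if_pos rfl, if_true, this,
          norm_mul, mul_pow]
      · have hz : a i = 0 := hzero i hi
        simp only [Pi.smul_apply, smul_eq_mul, if_neg hi, hz, sub_zero]
        rw [norm_mul, mul_pow]
    rw [hB', hS'] at key
    -- key : B + P * S ≤ |c|^2 B + P * (|c|^2 S)
    have hcabs : ‖c‖ = (‖a l‖)⁻¹ := by rw [hc, norm_inv]
    have halpos : 0 < ‖a l‖ := norm_pos_iff.mpr hal
    have hsmall : ‖a l‖ ^ 2 ≤ 1 := by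
      rw [hcabs] at key
      have hF : 0 < B + P * S := by nlinarith
      have h1 : 1 ≤ ((‖a l‖)⁻¹) ^ 2 := by nlinarith
      rw [inv_pow] at h1
      have := (one_le_inv₀ (by positivity)).mp h1
      linarith
    exact ⟨l, eis_unit_of_small (ha l) hal hsmall, hzero⟩
  · -- contradiction: updating a at l strictly decreases the objective
    exfalso
    have ha'eis : IsEisVec (Function.update a l e') := by
      intro i
      by_cases hi : i = l
      · subst hi; rw [Function.update_self]; exact he'int
      · rw [Function.update_of_ne hi]; exact ha i
    have key := hmin b (Function.update a l e') ha'eis h0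
    have hsum : (∑ i, ‖Matrix.vecMul b H i - Function.update a l e' i‖ ^ 2) < S := by
      rw [hS]
      refine Finset.sum_lt_sum (fun i _ => ?_) ⟨l, Finset.mem_univ l, ?_⟩
      · by_cases hi : i = l
        · subst hi
          rw [Function.update_self]
          exact pow_le_pow_left₀ (norm_nonneg _) hlt.le 2
        · rw [Function.update_of_ne hi]
      · rw [Function.update_self]
        exact pow_lt_pow_left₀ hlt (norm_nonneg _) two_ne_zero
    rw [← hB] at key
    nlinarith
end
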